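/- Let X : [0,T) → ℝ^N be a solution of the gradient flow of F^N_m with X(0) = X_0 and F^N_m(X_0) < 0. Then for all t ∈ [0,T), (1/2)|X(t)|² ≤ (1/2)|X_0|² + (m−1) F^N_m(X_0) t; consequently T ≤ |X_0|² / (2(m−1)(−F^N_m(X_0))), i.e., the solution blows up in finite time. -/

import Mathlib

open scoped BigOperators RealInnerProductSpace
noncomputable section

/-- Internal (diffusion) part: sum of (X_{i+1} - X_i)^(1-m) over consecutive gaps. -/
def gapSum (m : ℝ) (p : ℕ) (X : EuclideanSpace ℝ (Fin p)) : ℝ :=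
  ∑ i : Fin p, if h : (i : ℕ) + 1 < p then (X ⟨(i : ℕ) + 1, h⟩ - X i) ^ (1 - m) else 0

/-- Interaction part: sum of |X_i - X_j|^(1-m) over ordered pairs i ≠ j. -/
def pairSum (m : ℝ) (p : ℕ) (X : EuclideanSpace ℝ (Fin p)) : ℝ :=
  ∑ i : Fin p, ∑ j : Fin p, if i ≠ j then |X i - X j| ^ (1 - m) else 0

/-- The discrete free energy F^p_m. -/
def FF (m χ : ℝ) (p : ℕ) (X : EuclideanSpace ℝ (Fin p)) : ℝ :=
  (m - 1)⁻¹ * gapSum m p X - (χ / (m - 1)) * pairSum m p X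

/-- Membership in R^p: strictly increasing with zero mean. -/
def memR (p : ℕ) (X : EuclideanSpace ℝ (Fin p)) : Prop :=
  (StrictMono fun i => X i) ∧ ∑ i, X i = 0

/-- The critical constant C_p, with 1/C_p the sup of the HLS ratio. -/
def Cp (m : ℝ) (p : ℕ) : ℝ :=
  (sSup {r : ℝ | ∃ X : EuclideanSpace ℝ (Fin p), memR p X ∧
    r = pairSum m p X / gapSum m p X})⁻¹

/-- The functional F^p_{m,α} with confining quadratic potential. -/
def FFa (m χ α : ℝ) (p : ℕ) (X : EuclideanSpace ℝ (Fin p)) : ℝ :=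
  FF m χ p X + α / 2 * ‖X‖ ^ 2

/-- H^N_{m+1}(Y) = |∇F^N_m(Y)|² − ((m−1) F^N_m(Y))². -/
def Hfun (m χ : ℝ) (N : ℕ) (Y : EuclideanSpace ℝ (Fin N)) : ℝ :=
  ‖gradient (FF m χ N) Y‖ ^ 2 - ((m - 1) * FF m χ N Y) ^ 2

/-- X : [0,T) → R^N is a solution of the gradient flow of F^N_m. -/
def isGFlow (m χ : ℝ) (N : ℕ) (T : ℝ) (X : ℝ → EuclideanSpace ℝ (Fin N)) : Prop :=
  ∀ t ∈ Set.Ico (0 : ℝ) T, memR N (X t) ∧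
    HasDerivWithinAt X (-(gradient (FF m χ N) (X t))) (Set.Ico (0 : ℝ) T) t

/-- The gap Y_{i+1} - Y_i (0 if i+1 is out of range). -/
def gapAt (N : ℕ) (Y : EuclideanSpace ℝ (Fin N)) (i : ℕ) : ℝ :=
  if h : i + 1 < N then Y ⟨i + 1, h⟩ - Y ⟨i, Nat.lt_of_succ_lt h⟩ else 0

lemma proj_diff {N : ℕ} (j : Fin N) (Y : EuclideanSpace ℝ (Fin N)) :
    DifferentiableAt ℝ (fun X : EuclideanSpace ℝ (Fin N) => X j) Y := by
  exact (EuclideanSpace.proj (𝕜 := ℝ) j).differentiableAt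

lemma FF_diff {m χ : ℝ} {N : ℕ} {Y : EuclideanSpace ℝ (Fin N)}
    (hY : StrictMono fun i => Y i) : DifferentiableAt ℝ (FF m χ N) Y := by
  have hgap : DifferentiableAt ℝ (gapSum m N) Y := by
    unfold gapSum
    apply DifferentiableAt.fun_sum
    intro i _
    by_cases h : (i : ℕ) + 1 < N
    · simp only [h, dif_pos]
      have hlt : Y i < Y ⟨(i : ℕ) + 1, h⟩ := hY (by simp [Fin.lt_def])
      exact ((proj_diff _ Y).sub (proj_diff _ Y)).rpow_const
        (Or.inl (ne_of_gt (sub_pos.2 hlt)))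
    · simp only [h, dif_neg, not_false_iff]
      exact differentiableAt_const 0
  have hpair : DifferentiableAt ℝ (pairSum m N) Y := by
    unfold pairSum
    apply DifferentiableAt.fun_sum
    intro i _
    apply DifferentiableAt.fun_sum
    intro j _
    by_cases h : i ≠ j
    · simp only [if_pos h]
      have hne : Y i - Y j ≠ 0 := sub_ne_zero.2 fun he => h (hY.injective he)
      exact (((differentiableAt_abs hne).comp Y
        ((proj_diff i Y).fun_sub (proj_diff j Y)))).rpow_const (Or.inl (by exact abs_ne_zero.2 hne))
    · simp only [if_neg h]
      exact differentiableAt_const 0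
  exact (hgap.const_mul _).sub (hpair.const_mul _)

lemma FF_homog {m χ : ℝ} {N : ℕ} {Y : EuclideanSpace ℝ (Fin N)}
    (hY : StrictMono fun i => Y i) {c : ℝ} (hc : 0 < c) :
    FF m χ N (c • Y) = c ^ (1 - m) * FF m χ N Y := by
  have hsmul : ∀ j : Fin N, (c • Y) j = c * Y j := fun j => rfl
  have hgap : gapSum m N (c • Y) = c ^ (1 - m) * gapSum m N Y := by
    unfold gapSum
    rw [Finset.mul_sum]
    apply Finset.sum_congr rfl
    intro i _
    by_cases h : (i : ℕ) + 1 < N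
    · simp only [h, dif_pos, hsmul]
      have hlt : Y i ≤ Y ⟨(i : ℕ) + 1, h⟩ := le_of_lt (hY (by simp [Fin.lt_def]))
      rw [← mul_sub, Real.mul_rpow hc.le (sub_nonneg.2 hlt)]
    · simp [h]
  have hpair : pairSum m N (c • Y) = c ^ (1 - m) * pairSum m N Y := by
    unfold pairSum
    rw [Finset.mul_sum]
    apply Finset.sum_congr rfl
    intro i _
    rw [Finset.mul_sum]
    apply Finset.sum_congr rfl
    intro j _
    by_cases h : i ≠ j
    · simp only [if_pos h, hsmul]
      rw [← mul_sub, abs_mul, abs_of_pos hc, Real.mul_rpow hc.le (abs_nonneg _)]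
    · simp [if_neg h]
  unfold FF
  rw [hgap, hpair]
  ring

lemma inner_gradient_eq {N : ℕ} (f : EuclideanSpace ℝ (Fin N) → ℝ)
    (Y v : EuclideanSpace ℝ (Fin N)) :
    ⟪gradient f Y, v⟫ = fderiv ℝ f Y v := by
  unfold gradient
  exact InnerProductSpace.toDual_symm_apply

lemma FF_euler {m χ : ℝ} {N : ℕ} {Y : EuclideanSpace ℝ (Fin N)}
    (hY : StrictMono fun i => Y i) :
    ⟪gradient (FF m χ N) Y, Y⟫ = (1 - m) * FF m χ N Y := by
  have hd := FF_diff (m := m) (χ := χ) hY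
  have hs : HasDerivAt (fun c : ℝ => c • Y) Y 1 := by
    simpa using (hasDerivAt_id (1 : ℝ)).smul_const Y
  have hpt : HasFDerivAt (FF m χ N) (fderiv ℝ (FF m χ N) Y) ((1 : ℝ) • Y) := by
    rw [one_smul]; exact hd.hasFDerivAt
  have h1 : HasDerivAt (fun c : ℝ => FF m χ N (c • Y)) (fderiv ℝ (FF m χ N) Y Y) 1 :=
    by have := hpt.comp_hasDerivAt 1 hs; exact this
  have h2 : HasDerivAt (fun c : ℝ => c ^ (1 - m) * FF m χ N Y) ((1 - m) * FF m χ N Y) 1 := by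
    have := (Real.hasDerivAt_rpow_const (x := (1 : ℝ)) (p := 1 - m)
      (Or.inl one_ne_zero)).mul_const (FF m χ N Y)
    simpa using this
  have heq : (fun c : ℝ => FF m χ N (c • Y)) =ᶠ[nhds (1 : ℝ)]
      fun c => c ^ (1 - m) * FF m χ N Y := by
    filter_upwards [Ioi_mem_nhds zero_lt_one] with c hc
    exact FF_homog hY hc
  have h2' : HasDerivAt (fun c : ℝ => FF m χ N (c • Y)) ((1 - m) * FF m χ N Y) 1 :=
    h2.congr_of_eventuallyEq heq
  rw [inner_gradient_eq]
  exact h1.unique h2'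

theorem stmt12 (N : ℕ) (hN : 2 ≤ N) (m χ : ℝ) (hm : 1 < m) (hχ : 0 < χ)
    (T : ℝ) (hT : 0 < T) (X : ℝ → EuclideanSpace ℝ (Fin N))
    (hflow : isGFlow m χ N T X) (hneg : FF m χ N (X 0) < 0) :
    (∀ t ∈ Set.Ico (0 : ℝ) T,
      (1 / 2) * ‖X t‖ ^ 2 ≤ (1 / 2) * ‖X 0‖ ^ 2 + (m - 1) * FF m χ N (X 0) * t) ∧
    T ≤ ‖X 0‖ ^ 2 / (2 * (m - 1) * (-(FF m χ N (X 0)))) := by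
  set S := Set.Ico (0 : ℝ) T with hS
  have h0S : (0 : ℝ) ∈ S := ⟨le_refl 0, hT⟩
  have hmem : ∀ t ∈ S, StrictMono fun i => X t i := fun t ht => ((hflow t ht).1).1
  have hX' : ∀ t ∈ S, HasDerivWithinAt X (-(gradient (FF m χ N) (X t))) S t :=
    fun t ht => (hflow t ht).2
  set φ : ℝ → ℝ := fun t => FF m χ N (X t) with hφdef
  -- derivative of φ
  have hφderiv : ∀ t ∈ S,
      HasDerivWithinAt φ (-(‖gradient (FF m χ N) (X t)‖ ^ 2)) S t := by
    intro t ht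
    have hd := FF_diff (m := m) (χ := χ) (hmem t ht)
    have hcomp := hd.hasFDerivAt.comp_hasDerivWithinAt t (hX' t ht)
    have hval : (fderiv ℝ (FF m χ N) (X t)) (-(gradient (FF m χ N) (X t)))
        = -(‖gradient (FF m χ N) (X t)‖ ^ 2) := by
      rw [← inner_gradient_eq, inner_neg_right, real_inner_self_eq_norm_sq]
    rw [hval] at hcomp
    exact hcomp
  have hφcont : ContinuousOn φ S := fun t ht => (hφderiv t ht).continuousWithinAt
  have hint : interior S = Set.Ioo (0 : ℝ) T := by rw [hS, interior_Ico]
  have hφat : ∀ t ∈ Set.Ioo (0 : ℝ) T,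
      HasDerivAt φ (-(‖gradient (FF m χ N) (X t)‖ ^ 2)) t := by
    intro t ht
    exact (hφderiv t (Set.Ioo_subset_Ico_self ht)).hasDerivAt
      (mem_nhds_iff.2 ⟨Set.Ioo 0 T, Set.Ioo_subset_Ico_self, isOpen_Ioo, ht⟩)
  have hφanti : AntitoneOn φ S := by
    apply antitoneOn_of_deriv_nonpos (convex_Ico 0 T) hφcont
    · intro t ht
      rw [hint] at ht
      exact (hφat t ht).differentiableAt.differentiableWithinAt
    · intro t ht
      rw [hint] at ht
      rw [(hφat t ht).deriv]
      simp [sq_nonneg]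
  -- derivative of the energy-like function g
  set g : ℝ → ℝ := fun t => (1 / 2) * ‖X t‖ ^ 2 - (m - 1) * FF m χ N (X 0) * t with hgdef
  have hgderiv : ∀ t ∈ S,
      HasDerivWithinAt g ((m - 1) * φ t - (m - 1) * FF m χ N (X 0)) S t := by
    intro t ht
    have hin := (hX' t ht).inner ℝ (hX' t ht)
    have hv : ⟪X t, -(gradient (FF m χ N) (X t))⟫
        + ⟪-(gradient (FF m χ N) (X t)), X t⟫ = 2 * ((m - 1) * φ t) := by
      rw [inner_neg_right, inner_neg_left, real_inner_comm]
      have he := FF_euler (m := m) (χ := χ) (hmem t ht)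
      rw [he]
      ring
    rw [hv] at hin
    have hnorm : HasDerivWithinAt (fun t => (1 / 2) * ⟪X t, X t⟫)
        ((1 / 2) * (2 * ((m - 1) * φ t))) S t := hin.const_mul _
    have hnorm' : HasDerivWithinAt (fun t => (1 / 2) * ‖X t‖ ^ 2)
        ((m - 1) * φ t) S t := by
      have : (fun t => (1 / 2) * ⟪X t, X t⟫) = fun t => (1 / 2) * ‖X t‖ ^ 2 := by
        funext u; rw [real_inner_self_eq_norm_sq]
      rw [this] at hnorm
      convert hnorm using 1
      ring
    have hlin : HasDerivWithinAt (fun t : ℝ => (m - 1) * FF m χ N (X 0) * t)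
        ((m - 1) * FF m χ N (X 0)) S t := by
      simpa using (hasDerivWithinAt_id t S).const_mul ((m - 1) * FF m χ N (X 0))
    exact hnorm'.sub hlin
  have hgat : ∀ t ∈ Set.Ioo (0 : ℝ) T,
      HasDerivAt g ((m - 1) * φ t - (m - 1) * FF m χ N (X 0)) t := by
    intro t ht
    exact (hgderiv t (Set.Ioo_subset_Ico_self ht)).hasDerivAt
      (mem_nhds_iff.2 ⟨Set.Ioo 0 T, Set.Ioo_subset_Ico_self, isOpen_Ioo, ht⟩)
  have hganti : AntitoneOn g S := by
    apply antitoneOn_of_deriv_nonpos (convex_Ico 0 T)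
      (fun t ht => (hgderiv t ht).continuousWithinAt)
    · intro t ht
      rw [hint] at ht
      exact (hgat t ht).differentiableAt.differentiableWithinAt
    · intro t ht
      rw [hint] at ht
      rw [(hgat t ht).deriv]
      have hφle : φ t ≤ φ 0 := hφanti h0S (Set.Ioo_subset_Ico_self ht) ht.1.le
      have hm1 : (0 : ℝ) < m - 1 := by linarith
      have : φ 0 = FF m χ N (X 0) := rfl
      nlinarith
  have part1 : ∀ t ∈ S,
      (1 / 2) * ‖X t‖ ^ 2 ≤ (1 / 2) * ‖X 0‖ ^ 2 + (m - 1) * FF m χ N (X 0) * t := by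
    intro t ht
    have := hganti h0S ht ht.1
    simp only [hgdef] at this
    linarith [this]
  refine ⟨part1, ?_⟩
  by_contra hcon
  push_neg at hcon
  set F0 := FF m χ N (X 0) with hF0def
  have hm1 : (0 : ℝ) < m - 1 := by linarith
  have hD : (0 : ℝ) < 2 * (m - 1) * (-F0) := mul_pos (mul_pos two_pos hm1) (neg_pos.2 hneg)
  set B := ‖X 0‖ ^ 2 / (2 * (m - 1) * (-F0)) with hBdef
  have hBD : B * (2 * (m - 1) * (-F0)) = ‖X 0‖ ^ 2 := div_mul_cancel₀ _ (ne_of_gt hD)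
  have hB0 : 0 ≤ B := div_nonneg (sq_nonneg _) hD.le
  set t := (B + T) / 2 with htdef
  have htS : t ∈ S := ⟨by rw [htdef]; linarith, by rw [htdef]; linarith⟩
  have h1 := part1 t htS
  have hXt : 0 ≤ (1 / 2) * ‖X t‖ ^ 2 := by positivity
  have hBt : B < t := by rw [htdef]; linarith
  nlinarith [h1, hXt, hBD, hBt]
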